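/- Let Δ and Δ̂ be real-valued random variables on a common probability space, and let ε > 0. Then E[ |Δ| · 1{Δ̂·Δ ≤ 0} ] ≤ ε·P(|Δ| ≤ ε) + E[ |Δ̂ − Δ| · 1{|Δ̂ − Δ| ≥ ε} ], provided the expectations exist. -/

import Mathlib

open MeasureTheory

theorem regret_split_bound
    {Ω : Type*} [MeasurableSpace Ω] (μ : Measure Ω) [IsProbabilityMeasure μ]
    (Δ Δhat : Ω → ℝ) (hΔ : Measurable Δ) (hΔhat : Measurable Δhat)
    (ε : ℝ) (hε : 0 < ε)
    (h1 : Integrable (fun ω =>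
      |Δ ω| * Set.indicator {ω' | Δhat ω' * Δ ω' ≤ 0} (fun _ => (1 : ℝ)) ω) μ)
    (h2 : Integrable (fun ω =>
      |Δhat ω - Δ ω| * Set.indicator {ω' | ε ≤ |Δhat ω' - Δ ω'|} (fun _ => (1 : ℝ)) ω) μ) :
    ∫ ω, |Δ ω| * Set.indicator {ω' | Δhat ω' * Δ ω' ≤ 0} (fun _ => (1 : ℝ)) ω ∂μ ≤
      ε * (μ {ω | |Δ ω| ≤ ε}).toReal +
        ∫ ω, |Δhat ω - Δ ω| * Set.indicator {ω' | ε ≤ |Δhat ω' - Δ ω'|} (fun _ => (1 : ℝ)) ω ∂μ := by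
  have hmeas : MeasurableSet {ω | |Δ ω| ≤ ε} := measurableSet_le hΔ.abs measurable_const
  have hind : Integrable (fun ω => ε * Set.indicator {ω' | |Δ ω'| ≤ ε} (fun _ => (1 : ℝ)) ω) μ := by
    refine (Integrable.indicator (integrable_const 1) hmeas).const_mul ε
  have key : ∀ ω, |Δ ω| * Set.indicator {ω' | Δhat ω' * Δ ω' ≤ 0} (fun _ => (1 : ℝ)) ω ≤
      ε * Set.indicator {ω' | |Δ ω'| ≤ ε} (fun _ => (1 : ℝ)) ω +
      |Δhat ω - Δ ω| * Set.indicator {ω' | ε ≤ |Δhat ω' - Δ ω'|} (fun _ => (1 : ℝ)) ω := by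
    intro ω
    by_cases hA : Δhat ω * Δ ω ≤ 0
    · have habs : |Δ ω| ≤ |Δhat ω - Δ ω| := by
        rcases abs_cases (Δ ω) with ⟨h, hpos⟩ | ⟨h, hneg⟩
        · rcases abs_cases (Δhat ω - Δ ω) with ⟨h2', _⟩ | ⟨h2', _⟩ <;> nlinarith
        · rcases abs_cases (Δhat ω - Δ ω) with ⟨h2', _⟩ | ⟨h2', _⟩ <;> nlinarith
      rw [Set.indicator_of_mem (show ω ∈ {ω' | Δhat ω' * Δ ω' ≤ 0} from hA), mul_one]
      by_cases hB : |Δ ω| ≤ ε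
      · rw [Set.indicator_of_mem (show ω ∈ {ω' | |Δ ω'| ≤ ε} from hB), mul_one]
        have : (0:ℝ) ≤ |Δhat ω - Δ ω| * Set.indicator {ω' | ε ≤ |Δhat ω' - Δ ω'|}
            (fun _ => (1 : ℝ)) ω :=
          mul_nonneg (abs_nonneg _) (Set.indicator_nonneg (fun _ _ => zero_le_one) ω)
        linarith
      · push_neg at hB
        have hC : ε ≤ |Δhat ω - Δ ω| := le_trans hB.le habs
        rw [Set.indicator_of_mem (show ω ∈ {ω' | ε ≤ |Δhat ω' - Δ ω'|} from hC), mul_one]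
        have : (0:ℝ) ≤ ε * Set.indicator {ω' | |Δ ω'| ≤ ε} (fun _ => (1 : ℝ)) ω :=
          mul_nonneg hε.le (Set.indicator_nonneg (fun _ _ => zero_le_one) ω)
        linarith
    · rw [Set.indicator_of_notMem (show ω ∉ {ω' | Δhat ω' * Δ ω' ≤ 0} from hA), mul_zero]
      exact add_nonneg (mul_nonneg hε.le (Set.indicator_nonneg (fun _ _ => zero_le_one) ω))
        (mul_nonneg (abs_nonneg _) (Set.indicator_nonneg (fun _ _ => zero_le_one) ω))
  calc ∫ ω, |Δ ω| * Set.indicator {ω' | Δhat ω' * Δ ω' ≤ 0} (fun _ => (1 : ℝ)) ω ∂μ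
      ≤ ∫ ω, (ε * Set.indicator {ω' | |Δ ω'| ≤ ε} (fun _ => (1 : ℝ)) ω +
          |Δhat ω - Δ ω| * Set.indicator {ω' | ε ≤ |Δhat ω' - Δ ω'|} (fun _ => (1 : ℝ)) ω) ∂μ :=
        integral_mono h1 (hind.add h2) key
    _ = ε * (μ {ω | |Δ ω| ≤ ε}).toReal +
        ∫ ω, |Δhat ω - Δ ω| * Set.indicator {ω' | ε ≤ |Δhat ω' - Δ ω'|} (fun _ => (1 : ℝ)) ω ∂μ := by
        rw [integral_add hind h2, integral_const_mul, show (fun _ : Ω => (1:ℝ)) = (1 : Ω → ℝ) from rfl, integral_indicator_one hmeas, Measure.real]
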